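/- The Weighted Area GCM satisfies Transaction Bundling: for transactions tx1 ≃ (t1, K1), tx2 ≃ (t2, K2), and their concatenation tx3 ≃ (t1+t2, K1∪K2), it holds that t1·(1 + Σ_{k∈K1} w_k) + t2·(1 + Σ_{k∈K2} w_k) ≤ (t1+t2)·(1 + Σ_{k∈K1∪K2} w_k). Moreover, the inequality is an equality if and only if K1 = K2; in particular the property holds strictly whenever K1 ≠ K2. -/
import Mathlib


/-- The Weighted Area GCM satisfies Transaction Bundling: for
transactions `tx1 ≃ (t1, K1)`, `tx2 ≃ (t2, K2)` and their concatenation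
`tx3 ≃ (t1+t2, K1∪K2)`,
`t1·(1 + Σ_{k∈K1} w_k) + t2·(1 + Σ_{k∈K2} w_k) ≤ (t1+t2)·(1 + Σ_{k∈K1∪K2} w_k)`,
with equality if and only if `K1 = K2`; in particular the property holds
strictly whenever `K1 ≠ K2`. -/
theorem weightedArea_transaction_bundling
    {Key : Type} [DecidableEq Key]
    (w : Key → ℝ) (hw : ∀ k, 0 < w k)
    (t1 t2 : ℝ) (ht1 : 0 < t1) (ht2 : 0 < t2)
    (K1 K2 : Finset Key) (hK1 : K1.Nonempty) (hK2 : K2.Nonempty) :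
    (t1 * (1 + ∑ k ∈ K1, w k) + t2 * (1 + ∑ k ∈ K2, w k)
        ≤ (t1 + t2) * (1 + ∑ k ∈ K1 ∪ K2, w k)) ∧
    ((t1 * (1 + ∑ k ∈ K1, w k) + t2 * (1 + ∑ k ∈ K2, w k)
        = (t1 + t2) * (1 + ∑ k ∈ K1 ∪ K2, w k)) ↔ K1 = K2) := by

  set S1 := ∑ k ∈ K1, w k with hS1
  set S2 := ∑ k ∈ K2, w k with hS2
  set S := ∑ k ∈ K1 ∪ K2, w k with hS
  have h1 : S1 ≤ S := Finset.sum_le_sum_of_subset_of_nonneg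
    Finset.subset_union_left (fun i _ _ => (hw i).le)
  have h2 : S2 ≤ S := Finset.sum_le_sum_of_subset_of_nonneg
    Finset.subset_union_right (fun i _ _ => (hw i).le)
  have key : ∀ (A : Finset Key), A ⊆ K1 ∪ K2 → (∑ k ∈ A, w k) = S → A = K1 ∪ K2 := by
    intro A hsub heq
    by_contra hne
    have hss : A ⊂ K1 ∪ K2 := ⟨hsub, fun h => hne (le_antisymm hsub h)⟩
    have := Finset.sum_lt_sum_of_subset hss.1 (Finset.exists_of_ssubset hss).choose_spec.1
      (Finset.exists_of_ssubset hss).choose_spec.2 (hw _) (fun i _ _ => (hw i).le)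
    exact absurd heq (ne_of_lt this)
  constructor
  · nlinarith
  · constructor
    · intro heq
      have e1 : S1 = S := by nlinarith
      have e2 : S2 = S := by nlinarith
      exact (key K1 Finset.subset_union_left e1).trans
        (key K2 Finset.subset_union_right e2).symm
    · intro h
      subst h
      have hSS : S = S1 := by rw [hS, hS1, Finset.union_self]
      rw [hSS]; ring
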